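/- Let H be a graph, let u and v be vertices of H connected by a path in H, and let 𝓕 be a collection of pairwise vertex-disjoint paths in H. Then there exists a path P in H between u and v with the following property: there do not exist three vertices x, y, z ∈ V(P) such that (i) dist_P(u,x) < dist_P(u,y) < dist_P(u,z), and (ii) there exist a path in 𝓕 that contains both x and z and a different path in 𝓕 that contains y. -/

import Mathlib

open SimpleGraph SimpleGraph.Walk

namespace Stmt10Aux
variable {α : Type*} [DecidableEq α]


def blocks : List α → ℕ
  | [] => 0
  | a :: l => blocks l + (if l.head? = some a then 0 else 1)

lemma blocks_pos {l : List α} (h : l ≠ []) : 1 ≤ blocks l := by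
  induction l with
  | nil => exact absurd rfl h
  | cons a l ih =>
    by_cases hl : l = []
    · subst hl; simp [blocks]
    · have := ih hl
      simp only [blocks]
      omega

lemma blocks_append (l1 l2 : List α)
    (h : ∀ x, l1.getLast? = some x → l2.head? = some x → False) :
    blocks (l1 ++ l2) = blocks l1 + blocks l2 := by
  induction l1 with
  | nil => simp [blocks]
  | cons a l1 ih =>
    cases l1 with
    | nil =>
      simp only [List.nil_append, List.cons_append, blocks]
      have : ¬ l2.head? = some a := fun hh => h a rfl hh
      simp [this]
      omega
    | cons c l1' =>
      have ih' := ih (fun x hx => h x (by rw [List.getLast?_cons_cons]; exact hx))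
      simp only [List.cons_append, blocks] at *
      rw [ih']
      have h1 : ((c :: l1').append l2).head? = some a ↔ (c :: l1').head? = some a := by
        simp
      simp only [List.head?_cons]
      by_cases hca : c = a <;> simp [hca] <;> omega

lemma blocks_all_eq {l : List α} {i : α} (h : ∀ x ∈ l, x = i) (hne : l ≠ []) :
    blocks l = 1 := by
  induction l with
  | nil => exact absurd rfl hne
  | cons a l ih =>
    have ha : a = i := h a (by simp)
    by_cases hl : l = []
    · subst hl; simp [blocks]
    · have hli := ih (fun x hx => h x (by simp [hx])) hl
      have : l.head? = some a := by
        cases l with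
        | nil => exact absurd rfl hl
        | cons b l' => simp [h b (by simp), ha]
      simp [blocks, this, hli]

lemma two_le_blocks_aux {l : List α} {x c : α} (hc : c ∈ l) (hx : l.head? = some x)
    (hne : c ≠ x) : 2 ≤ blocks l := by
  induction l with
  | nil => simp at hc
  | cons a l ih =>
    simp only [List.head?_cons, Option.some.injEq] at hx
    subst hx
    have hcl : c ∈ l := by
      rcases List.mem_cons.1 hc with rfl | h
      · exact absurd rfl hne
      · exact h
    by_cases hh : l.head? = some a
    · have := ih hcl hh
      simp only [blocks]; omega
    · have hlne : l ≠ [] := by rintro rfl; simp at hcl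
      have := blocks_pos hlne
      simp only [blocks, if_neg hh]; omega

lemma two_le_blocks {l : List α} {i j : α} (hi : i ∈ l) (hj : j ∈ l) (hne : i ≠ j) :
    2 ≤ blocks l := by
  cases l with
  | nil => simp at hi
  | cons a l =>
    by_cases hia : i = a
    · subst hia
      exact two_le_blocks_aux hj rfl (Ne.symm hne)
    · exact two_le_blocks_aux hi rfl hia

lemma blocks_three {a m b : List α} {i : α} (hh : m.head? = some i)
    (hl : m.getLast? = some i) (ha : i ∉ a) (hb : i ∉ b) :
    blocks (a ++ m ++ b) = blocks a + blocks m + blocks b := by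
  rw [List.append_assoc, blocks_append, blocks_append]
  · omega
  · intro x hx hx2
    rw [hl] at hx
    have : x = i := (Option.some.injEq _ _ ▸ hx : i = x).symm
    subst this
    exact hb (List.mem_of_mem_head? hx2)
  · intro x hx hx2
    have hx2' : m.head? = some x := by
      cases m with
      | nil => simp at hh
      | cons c m' => simpa using hx2
    rw [hh] at hx2'
    have : x = i := (Option.some.injEq _ _ ▸ hx2' : i = x).symm
    subst this
    exact ha (List.mem_of_mem_getLast? hx)


variable {V : Type*} [DecidableEq V] {G : SimpleGraph V}


lemma length_takeUntil_eq {v w x : V} (p : G.Walk v w) (h : x ∈ p.support) :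
    (p.takeUntil x h).length = p.support.idxOf x := by
  induction p with
  | nil =>
    rw [Walk.mem_support_nil_iff] at h
    subst x
    simp!
  | cons r p ih =>
    cases h with
    | head => simp!
    | tail _ h' =>
      simp! only
      split_ifs with hvx
      · subst hvx; simp
      · simp only [Walk.length_cons, Walk.support_cons, ih h']
        rw [List.idxOf_cons_ne _ hvx]

lemma support_takeUntil_eq {v w x : V} (p : G.Walk v w) (h : x ∈ p.support) :
    (p.takeUntil x h).support = p.support.take (p.support.idxOf x + 1) := by
  induction p with
  | nil =>
    rw [Walk.mem_support_nil_iff] at h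
    subst x
    simp!
  | cons r p ih =>
    cases h with
    | head => simp!
    | tail _ h' =>
      simp! only
      split_ifs with hvx
      · subst hvx; simp
      · simp only [Walk.support_cons, ih h']
        rw [List.idxOf_cons_ne _ hvx]

lemma support_dropUntil_eq {v w x : V} (p : G.Walk v w) (h : x ∈ p.support) :
    (p.dropUntil x h).support = p.support.drop (p.support.idxOf x) := by
  have hidx : p.support.idxOf x < p.support.length := List.idxOf_lt_length_iff.2 h
  have hspec := congrArg Walk.support (p.take_spec h)
  rw [Walk.support_append, support_takeUntil_eq] at hspec
  have htail : (p.dropUntil x h).support.tail = p.support.drop (p.support.idxOf x + 1) := by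
    have := List.take_append_drop (p.support.idxOf x + 1) p.support
    conv at hspec => rhs; rw [← this]
    exact (List.append_cancel_left hspec).symm ▸ rfl
  have hcons : (p.dropUntil x h).support = x :: (p.dropUntil x h).support.tail :=
    Walk.support_eq_cons _
  rw [hcons, htail]
  rw [List.drop_eq_getElem_cons hidx, List.getElem_idxOf hidx]

lemma mem_take_idxOf {l : List V} {w : V} {n : ℕ} (h : w ∈ l.take n) :
    l.idxOf w < n := by
  have h1 : l.idxOf w = (l.take n).idxOf w := by
    conv_lhs => rw [← List.take_append_drop n l]
    rw [List.idxOf_append_of_mem h]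
  rw [h1]
  exact lt_of_lt_of_le (List.idxOf_lt_length_iff.2 h) (by simpa using List.length_take_le n l)

lemma mem_drop_idxOf {l : List V} (hl : l.Nodup) {w : V} {n : ℕ} (h : w ∈ l.drop n) :
    n ≤ l.idxOf w := by
  by_contra hlt
  push_neg at hlt
  have hw : w ∈ l := List.mem_of_mem_drop h
  have hidx : l.idxOf w < l.length := List.idxOf_lt_length_iff.2 hw
  have : w ∈ l.take n := by
    have hg : (l.take n)[l.idxOf w]'(by rw [List.length_take]; omega) = w := by
      rw [List.getElem_take]
      exact List.getElem_idxOf hidx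
    exact hg ▸ List.getElem_mem _
  
  exact (List.disjoint_take_drop hl le_rfl) this h


end Stmt10Aux

open Stmt10Aux

theorem stmt10 {V : Type*} [DecidableEq V] (H : SimpleGraph V) (u v : V)
    (hconn : H.Reachable u v)
    {ι : Type*} (s t : ι → V) (F : ∀ i : ι, H.Walk (s i) (t i))
    (hpath : ∀ i, (F i).IsPath)
    (hdisj : ∀ i j, i ≠ j → ∀ w : V, w ∈ (F i).support → w ∉ (F j).support) :
    ∃ P : H.Walk u v, P.IsPath ∧
      ¬ ∃ (x y z : V) (hx : x ∈ P.support) (hy : y ∈ P.support) (hz : z ∈ P.support),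
        (P.takeUntil x hx).length < (P.takeUntil y hy).length ∧
        (P.takeUntil y hy).length < (P.takeUntil z hz).length ∧
        ∃ i j : ι, i ≠ j ∧ x ∈ (F i).support ∧ z ∈ (F i).support ∧ y ∈ (F j).support := by
  classical
  -- index assignment
  set idx : V → Option ι := fun w =>
    if h : ∃ i, w ∈ (F i).support then some h.choose else none with hidxdef
  have idx_of_mem : ∀ (w : V) (i : ι), w ∈ (F i).support → idx w = some i := by
    intro w i hw
    have hex : ∃ i, w ∈ (F i).support := ⟨i, hw⟩
    simp only [hidxdef, dif_pos hex]
    congr 1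
    by_contra hne
    exact hdisj _ _ hne w hex.choose_spec hw
  have mem_of_idx : ∀ (w : V) (i : ι), idx w = some i → w ∈ (F i).support := by
    intro w i hw
    simp only [hidxdef] at hw
    split at hw
    · next hex =>
      injection hw with hw
      exact hw ▸ hex.choose_spec
    · exact absurd hw (by simp)
  set Lf : List V → List ι := fun l => l.filterMap idx with hLdef
  have Lf_append : ∀ l1 l2 : List V, Lf (l1 ++ l2) = Lf l1 ++ Lf l2 := by
    intro l1 l2; simp [hLdef, List.filterMap_append]
  have mem_Lf : ∀ (l : List V) (a : ι), a ∈ Lf l ↔ ∃ w ∈ l, idx w = some a := by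
    intro l a; simp [hLdef, List.mem_filterMap]
  have Lf_single : ∀ (w : V) (a : ι), idx w = some a → Lf [w] = [a] := by
    intro w a h
    simp only [hLdef, List.filterMap_cons, h, List.filterMap_nil]
  set meas : H.Walk u v → ℕ := fun P => blocks (Lf P.support) with hmdef
  have hexmin : ∃ n, ∃ P : H.Walk u v, P.IsPath ∧ meas P = n :=
    ⟨_, hconn.some.bypass, hconn.some.bypass_isPath, rfl⟩
  obtain ⟨P, hP, hmP⟩ := Nat.find_spec hexmin
  refine ⟨P, hP, ?_⟩
  rintro ⟨x, y, z, hx, hy, hz, hxy, hyz, i, j, hij, hxi, hzi, hyj⟩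
  rw [length_takeUntil_eq, length_takeUntil_eq] at hxy
  rw [length_takeUntil_eq, length_takeUntil_eq] at hyz
  set S := P.support with hSdef
  have hS : S.Nodup := hP.support_nodup
  -- first and last hits of F i on P
  set Q : ℕ → Prop := fun n => ∃ h : n < S.length, S[n]'h ∈ (F i).support with hQdef
  have hQx : Q (S.idxOf x) :=
    ⟨List.idxOf_lt_length_iff.2 hx, by rw [List.getElem_idxOf]; exact hxi⟩
  have hQz : Q (S.idxOf z) :=
    ⟨List.idxOf_lt_length_iff.2 hz, by rw [List.getElem_idxOf]; exact hzi⟩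
  have hQex : ∃ n, Q n := ⟨_, hQx⟩
  set k1 := Nat.find hQex with hk1def
  set k2 := Nat.findGreatest Q S.length with hk2def
  obtain ⟨hk1lt, hk1F⟩ : Q k1 := Nat.find_spec hQex
  have hk1min : ∀ n, Q n → k1 ≤ n := fun n hn => Nat.find_min' hQex hn
  have hk2max : ∀ n, Q n → n ≤ k2 := by
    intro n hn
    exact Nat.le_findGreatest (le_of_lt hn.1) hn
  obtain ⟨hk2lt, hk2F⟩ : Q k2 :=
    Nat.findGreatest_spec (m := S.idxOf z) (le_of_lt hQz.1) hQz
  set x' := S[k1]'hk1lt with hx'def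
  set z' := S[k2]'hk2lt with hz'def
  have hx'S : x' ∈ S := List.getElem_mem _
  have hz'S : z' ∈ S := List.getElem_mem _
  have hix' : S.idxOf x' = k1 := List.Nodup.idxOf_getElem hS k1 hk1lt
  have hiz' : S.idxOf z' = k2 := List.Nodup.idxOf_getElem hS k2 hk2lt
  have hk1x : k1 ≤ S.idxOf x := hk1min _ hQx
  have hk2z : S.idxOf z ≤ k2 := hk2max _ hQz
  have hk12 : k1 < k2 := by omega
  -- decompose P
  set C := P.takeUntil z' hz'S with hCdef
  set D := P.dropUntil z' hz'S with hDdef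
  have hCsup : C.support = S.take (k2 + 1) := by
    rw [hCdef, support_takeUntil_eq, hiz']
  have hDsup : D.support = S.drop k2 := by
    rw [hDdef, support_dropUntil_eq, hiz']
  have hDtail : D.support.tail = S.drop (k2 + 1) := by
    rw [hDsup, List.tail_drop]
  have hx'C : x' ∈ C.support := by
    rw [hCsup]
    have hlen : k1 < (S.take (k2 + 1)).length := by
      rw [List.length_take]; omega
    have : (S.take (k2 + 1))[k1]'hlen = x' := by
      rw [List.getElem_take]
    exact this ▸ List.getElem_mem _
  have hCidx : C.support.idxOf x' = k1 := by
    rw [hCsup]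
    have h1 : S.idxOf x' = (S.take (k2 + 1)).idxOf x' := by
      conv_lhs => rw [← List.take_append_drop (k2 + 1) S]
      rw [List.idxOf_append_of_mem (hCsup ▸ hx'C)]
    rw [← h1, hix']
  set C1 := C.takeUntil x' hx'C with hC1def
  set C2 := C.dropUntil x' hx'C with hC2def
  have hC1sup : C1.support = S.take (k1 + 1) := by
    rw [hC1def, support_takeUntil_eq, hCidx, hCsup, List.take_take,
      min_eq_left (by omega)]
  have hC2sup : C2.support = (S.take (k2 + 1)).drop k1 := by
    rw [hC2def, support_dropUntil_eq, hCidx, hCsup]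
  have hC2tail : C2.support.tail = (S.take (k2 + 1)).drop (k1 + 1) := by
    rw [hC2sup, List.tail_drop]
  have hSdecomp : S = S.take (k1 + 1) ++ ((S.take (k2 + 1)).drop (k1 + 1) ++ S.drop (k2 + 1)) := by
    have h1 : S.take (k1 + 1) = (S.take (k2 + 1)).take (k1 + 1) := by
      rw [List.take_take, min_eq_left (by omega)]
    rw [h1, ← List.append_assoc, List.take_append_drop, List.take_append_drop]
  -- y is strictly inside
  have hyC2t : y ∈ C2.support.tail := by
    rw [hC2tail]
    have hymem : y ∈ S := hy
    rw [hSdecomp] at hymem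
    rcases List.mem_append.1 hymem with h1 | h2
    · exfalso
      have := mem_take_idxOf h1
      omega
    rcases List.mem_append.1 h2 with h3 | h4
    · exact h3
    · exfalso
      have := mem_drop_idxOf hS h4
      omega
  -- extremality of hits
  have hC1Fi : ∀ w ∈ C1.support, w ∈ (F i).support → w = x' := by
    intro w hw hwF
    rw [hC1sup] at hw
    have h1 : S.idxOf w < k1 + 1 := mem_take_idxOf hw
    have h2 : Q (S.idxOf w) :=
      ⟨List.idxOf_lt_length_iff.2 (List.mem_of_mem_take hw), by
        rw [List.getElem_idxOf]; exact hwF⟩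
    have h3 : k1 ≤ S.idxOf w := hk1min _ h2
    exact (List.idxOf_inj (List.mem_of_mem_take hw)).1 (by omega)
  have hDFi : ∀ w ∈ D.support, w ∈ (F i).support → w = z' := by
    intro w hw hwF
    rw [hDsup] at hw
    have hwS : w ∈ S := List.mem_of_mem_drop hw
    have h1 : k2 ≤ S.idxOf w := mem_drop_idxOf hS hw
    have h2 : Q (S.idxOf w) :=
      ⟨List.idxOf_lt_length_iff.2 hwS, by rw [List.getElem_idxOf]; exact hwF⟩
    have h3 : S.idxOf w ≤ k2 := hk2max _ h2
    exact (List.idxOf_inj hwS).1 (by omega)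
  -- the replacement path inside F i
  have hx'Fi : x' ∈ (F i).support := hk1F
  have hz'Fi : z' ∈ (F i).support := hk2F
  set R : H.Walk x' z' :=
    ((F i).takeUntil x' hx'Fi).reverse.append ((F i).takeUntil z' hz'Fi) with hRdef
  set Qp := R.bypass with hQpdef
  have hQpPath : Qp.IsPath := R.bypass_isPath
  have hQpsub : Qp.support ⊆ (F i).support := by
    intro w hw
    have hw1 : w ∈ R.support := R.support_bypass_subset hw
    rw [hRdef, Walk.mem_support_append_iff] at hw1
    rcases hw1 with h1 | h1
    · rw [Walk.support_reverse, List.mem_reverse] at h1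
      exact (F i).support_takeUntil_subset _ h1
    · exact (F i).support_takeUntil_subset _ h1
  -- the new walk
  set W : H.Walk u v := C1.append (Qp.append D) with hWdef
  have hWsup : W.support = C1.support ++ (Qp.support.tail ++ D.support.tail) := by
    rw [hWdef, Walk.support_append, Walk.support_append]
    congr 1
    rw [Qp.support_eq_cons]
    simp
  have hx'Qpt : x' ∉ Qp.support.tail := by
    have := hQpPath.support_nodup
    rw [Qp.support_eq_cons] at this
    exact (List.nodup_cons.1 this).1
  have hz'Dt : z' ∉ D.support.tail := by
    have := (hP.dropUntil hz'S).support_nodup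
    rw [D.support_eq_cons] at this
    exact (List.nodup_cons.1 this).1
  have hQpt_Fi : ∀ w ∈ Qp.support.tail, w ∈ (F i).support :=
    fun w hw => hQpsub (List.mem_of_mem_tail hw)
  -- W is a path
  have hWpath : W.IsPath := by
    rw [Walk.isPath_def, hWsup]
    rw [List.nodup_append]
    refine ⟨(hP.takeUntil hz'S).takeUntil hx'C |>.support_nodup, ?_, ?_⟩
    · rw [List.nodup_append]
      refine ⟨hQpPath.support_nodup.sublist (List.tail_sublist _),
        (hP.dropUntil hz'S).support_nodup.sublist (List.tail_sublist _), ?_⟩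
      intro w hw _ hw' rfl
      have hwF : w ∈ (F i).support := hQpt_Fi w hw
      have : w = z' := hDFi w (List.mem_of_mem_tail hw') hwF
      exact hz'Dt (this ▸ hw')
    · intro w hw _ hw' rfl
      rcases List.mem_append.1 hw' with h1 | h1
      · have hwF : w ∈ (F i).support := hQpt_Fi w h1
        have : w = x' := hC1Fi w hw hwF
        exact hx'Qpt (this ▸ h1)
      · rw [hDtail] at h1
        rw [hC1sup] at hw
        have := mem_take_idxOf hw
        have := mem_drop_idxOf hS h1
        omega
  -- list decompositions for the measure
  have hC1ne : C1.support ≠ [] := C1.support_ne_nil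
  have hC1last : C1.support.dropLast ++ [x'] = C1.support := by
    have hg : C1.support.getLast hC1ne = x' := C1.getLast_support
    have h0 := List.dropLast_append_getLast hC1ne
    rw [hg] at h0
    exact h0
  have hx'dl : x' ∉ C1.support.dropLast := by
    have hnd := ((hP.takeUntil hz'S).takeUntil hx'C).support_nodup
    rw [← hC1last, List.nodup_append] at hnd
    intro hmem
    exact hnd.2.2 _ hmem _ (List.mem_singleton_self _) rfl
  set A' := Lf C1.support.dropLast with hA'def
  set B := Lf D.support.tail with hBdef
  have hiA' : i ∉ A' := by
    intro hmem
    obtain ⟨w, hw, hwi⟩ := (mem_Lf _ _).1 hmem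
    have hwF := mem_of_idx w i hwi
    have : w = x' := hC1Fi w (List.dropLast_subset _ hw) hwF
    exact hx'dl (this ▸ hw)
  have hiB : i ∉ B := by
    intro hmem
    obtain ⟨w, hw, hwi⟩ := (mem_Lf _ _).1 hmem
    have hwF := mem_of_idx w i hwi
    have : w = z' := hDFi w (List.mem_of_mem_tail hw) hwF
    exact hz'Dt (this ▸ hw)
  have hLC1 : Lf C1.support = A' ++ [i] := by
    rw [← hC1last, Lf_append, Lf_single x' i (idx_of_mem x' i hx'Fi)]
  -- middle of P : ends with z'
  have hC2tne : C2.support.tail ≠ [] := by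
    have : C2.support.tail.length = k2 - k1 := by
      rw [hC2tail, List.length_drop, List.length_take]
      omega
    intro hnil
    rw [hnil] at this
    simp at this
    omega
  have hC2last : C2.support.tail.dropLast ++ [z'] = C2.support.tail := by
    have hg : C2.support.tail.getLast hC2tne = z' := by
      rw [List.getLast_tail]
      exact C2.getLast_support
    have h0 := List.dropLast_append_getLast hC2tne
    rw [hg] at h0
    exact h0
  set Mp := Lf C2.support.tail with hMpdef
  have hMpconcat : Mp = Lf C2.support.tail.dropLast ++ [i] := by
    conv_lhs => rw [hMpdef, ← hC2last]
    rw [Lf_append, Lf_single z' i (idx_of_mem z' i hz'Fi)]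
  have hjMp : j ∈ Mp := by
    rw [hMpdef, mem_Lf]
    exact ⟨y, hyC2t, idx_of_mem y j hyj⟩
  -- measure of P
  have hLS : Lf S = A' ++ (i :: Mp) ++ B := by
    conv_lhs => rw [hSdecomp]
    rw [Lf_append, Lf_append, ← hC1sup, ← hC2tail, ← hDtail, hLC1]
    simp [List.append_assoc, hMpdef, hBdef]
  have hglMp : (i :: Mp).getLast? = some i := by
    rw [hMpconcat,
      show (i :: (Lf C2.support.tail.dropLast ++ [i])) = (i :: Lf C2.support.tail.dropLast) ++ [i] by simp]
    exact List.getLast?_concat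
  have hmeasP : blocks A' + blocks (i :: Mp) + blocks B = meas P := by
    rw [hmdef]
    simp only [← hSdef]
    rw [hLS, blocks_three (m := i :: Mp) (i := i) rfl hglMp hiA' hiB]
  have h2le : 2 ≤ blocks (i :: Mp) :=
    two_le_blocks (List.mem_cons_self) (List.mem_cons_of_mem _ hjMp) hij
  -- measure of W
  have hLW : Lf W.support = A' ++ (i :: Lf Qp.support.tail) ++ B := by
    rw [hWsup, Lf_append, Lf_append, hLC1]
    simp [List.append_assoc, hBdef]
  have hallW : ∀ a ∈ (i :: Lf Qp.support.tail), a = i := by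
    intro a ha
    rcases List.mem_cons.1 ha with rfl | ha
    · rfl
    · obtain ⟨w, hw, hwa⟩ := (mem_Lf _ _).1 ha
      have h1 := mem_of_idx w a hwa
      have h2 := hQpt_Fi w hw
      by_contra hne
      exact hdisj _ _ (Ne.symm hne) w h2 h1
  have hglW : (i :: Lf Qp.support.tail).getLast? = some i := by
    rw [List.getLast?_eq_getLast (by simp)]
    congr 1
    exact hallW _ (List.getLast_mem _)
  have hmeasW : meas W = blocks A' + 1 + blocks B := by
    rw [hmdef]
    simp only
    rw [hLW, blocks_three (m := i :: Lf Qp.support.tail) (i := i) rfl hglW hiA' hiB,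
      blocks_all_eq hallW (by simp)]
  -- contradiction with minimality
  have hlt : meas W < Nat.find hexmin := by
    rw [hmeasW, ← hmP, ← hmeasP]
    have := blocks_pos (l := B) -- maybe unused
    omega
  exact Nat.find_min hexmin hlt ⟨W, hWpath, rfl⟩
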